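/- Let (q, p, ω) be a primitive solution of 7x² + 59y² = 3^m (i.e. 7q² + 59p² = 3^ω with gcd(p,q) = 1, p, q nonzero, ω ≥ 5), with pq ≡ −1 (mod 3). Then gcd(A(p,q), B(p,q)) = 3⁵. -/

import Mathlib

def A (p q : ℤ) : ℤ := 59*p^2 - 236*p*q - 7*q^2
def B (p q : ℤ) : ℤ := -118*p^2 - 14*p*q + 14*q^2

set_option maxRecDepth 10000 in
lemma key243 : ∀ s : ZMod 243, 7*s^2 + 59 = 0 → s.val % 3 = 2 →
    (59 - 236*s - 7*s^2 = 0 ∧ -118 - 14*s + 14*s^2 = 0) := by decide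

theorem stmt4 (p q : ℤ) (hp : p ≠ 0) (hq : q ≠ 0) (hcop : Int.gcd p q = 1)
    (ω : ℕ) (hω : 5 ≤ ω) (h : 7*q^2 + 59*p^2 = 3^ω)
    (hmod : p * q ≡ -1 [ZMOD 3]) :
    Int.gcd (A p q) (B p q) = 3^5 := by
  have p3 : Prime (3:ℤ) := Int.prime_three
  -- 3 ∣ p*q + 1
  have hpq1 : (3:ℤ) ∣ p*q + 1 := by
    obtain ⟨k, hk⟩ := hmod.dvd
    exact ⟨-k, by linarith⟩
  -- 3 ∤ p and 3 ∤ q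
  have h3p : ¬ (3:ℤ) ∣ p := by
    intro hd
    obtain ⟨k, hk⟩ := hd
    obtain ⟨m, hm⟩ := hpq1
    have : (3:ℤ) ∣ 1 := ⟨m - k*q, by rw [hk] at hm; linarith⟩
    norm_num at this
  have h3q : ¬ (3:ℤ) ∣ q := by
    intro hd
    obtain ⟨k, hk⟩ := hd
    obtain ⟨m, hm⟩ := hpq1
    have : (3:ℤ) ∣ 1 := ⟨m - k*p, by rw [hk] at hm; linarith⟩
    norm_num at this
  -- 243 divides 7q²+59p²
  have hdvd243 : (243:ℤ) ∣ 7*q^2 + 59*p^2 := by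
    rw [h]
    have : (3:ℤ)^5 ∣ 3^ω := pow_dvd_pow 3 hω
    norm_num at this
    exact this
  -- Bezout certificate for p coprime to 243
  have hcp3 : IsCoprime p (3:ℤ) := (p3.coprime_iff_not_dvd.mpr h3p).symm
  have hcp243 : IsCoprime p (243:ℤ) := by
    have := hcp3.pow_right (n := 5)
    norm_num at this
    exact this
  obtain ⟨u, v, huv⟩ := hcp243
  -- move to ZMod 243
  set R := ZMod 243
  set P : R := (p : R) with hPdef
  set Q : R := (q : R) with hQdef
  set U : R := (u : R) with hUdef
  have h243 : (243 : R) = 0 := by decide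
  have hPU : U * P = 1 := by
    have hc : ((u*p + v*243 : ℤ) : R) = ((1:ℤ) : R) := by rw [huv]
    push_cast at hc
    rw [Int.cast_mul, Int.cast_mul] at hc
    push_cast at hc
    linear_combination hc - (v : R) * h243
  have hQP : 7*Q^2 + 59*P^2 = 0 := by
    have hz : ((7*q^2 + 59*p^2 : ℤ) : R) = 0 := by
      rw [ZMod.intCast_zmod_eq_zero_iff_dvd]
      exact_mod_cast hdvd243
    rw [Int.cast_add, Int.cast_mul, Int.cast_mul, Int.cast_pow, Int.cast_pow] at hz
    push_cast at hz
    exact hz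
  -- s := q*u mod 243
  set S : R := Q * U with hSdef
  have hs1 : 7*S^2 + 59 = 0 := by
    rw [hSdef]
    linear_combination U^2 * hQP - 59*(U*P + 1) * hPU
  -- 3 ∣ q*u - 2
  have hqu2 : (3:ℤ) ∣ q*u - 2 := by
    have hup1 : (3:ℤ) ∣ u*p - 1 := ⟨-81*v, by linarith⟩
    have hp21 : (3:ℤ) ∣ p^2 - 1 := by
      have hmod3 : p % 3 = 1 ∨ p % 3 = 2 := by omega
      rcases hmod3 with h1 | h1
      · have : (3:ℤ) ∣ p - 1 := by omega
        obtain ⟨k, hk⟩ := this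
        exact ⟨k*(p+1), by linear_combination (p+1)*hk⟩
      · have : (3:ℤ) ∣ p + 1 := by omega
        obtain ⟨k, hk⟩ := this
        exact ⟨k*(p-1), by linear_combination (p-1)*hk⟩
    have hkey : (3:ℤ) ∣ p^2 * (q*u - 2) := by
      obtain ⟨k1, hk1⟩ := hpq1
      obtain ⟨k2, hk2⟩ := hup1
      obtain ⟨k3, hk3⟩ := hp21
      exact ⟨u*p*k1 - k2 - 2*k3 - 1, by linear_combination (u*p)*hk1 - hk2 - 2*hk3⟩
    rcases (p3.dvd_mul.mp hkey) with hc | hc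
    · exact absurd (p3.dvd_of_dvd_pow hc) h3p
    · exact hc
  have hs2 : S.val % 3 = 2 := by
    have hSeq : S = ((q*u : ℤ) : R) := by rw [Int.cast_mul]
    have hval : ((S.val : ℤ)) = (q*u) % 243 := by
      rw [hSeq]
      exact ZMod.val_intCast _
    have h1 : ((S.val : ℤ)) % 3 = (q*u) % 3 := by
      rw [hval]
      exact Int.emod_emod_of_dvd _ (by norm_num)
    have h2 : (q*u) % 3 = 2 := by omega
    omega
  obtain ⟨hA0, hB0⟩ := key243 S hs1 hs2
  -- 243 ∣ A and 243 ∣ B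
  have hA243 : (243:ℤ) ∣ A p q := by
    have hz : ((A p q : ℤ) : R) = 0 := by
      simp only [A]
      rw [Int.cast_sub, Int.cast_sub, Int.cast_mul, Int.cast_mul, Int.cast_mul, Int.cast_mul, Int.cast_pow, Int.cast_pow]
      push_cast
      linear_combination P^2 * hA0 + (236*P*Q + 7*Q^2*(U*P + 1)) * hPU
    exact_mod_cast (ZMod.intCast_zmod_eq_zero_iff_dvd (A p q) 243).mp hz
  have hB243 : (243:ℤ) ∣ B p q := by
    have hz : ((B p q : ℤ) : R) = 0 := by
      simp only [B]
      rw [Int.cast_add, Int.cast_sub, Int.cast_mul, Int.cast_mul, Int.cast_mul, Int.cast_mul, Int.cast_pow, Int.cast_pow]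
      push_cast
      linear_combination P^2 * hB0 + (14*P*Q - 14*Q^2*(U*P + 1)) * hPU
    exact_mod_cast (ZMod.intCast_zmod_eq_zero_iff_dvd (B p q) 243).mp hz
  -- upper bound: gcd divides 243
  set d : ℕ := Int.gcd (A p q) (B p q) with hddef
  have hdA : (d:ℤ) ∣ A p q := Int.gcd_dvd_left _ _
  have hdB : (d:ℤ) ∣ B p q := Int.gcd_dvd_right _ _
  have hd486 : (d:ℤ) ∣ 2*(243*(p*q)) := by
    have heq : 2*(243*(p*q)) = -(2*(A p q) + B p q) := by simp only [A, B]; ring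
    rw [heq]
    exact ((hdA.mul_left 2).add hdB).neg_right
  -- d is odd
  have hAodd : ¬ (2:ℤ) ∣ A p q := by
    intro hd2
    have h3w : ¬ (2:ℤ) ∣ 3^ω := by
      intro hc
      have := Int.prime_two.dvd_of_dvd_pow hc
      norm_num at this
    apply h3w
    have heq : (3:ℤ)^ω = A p q + 2*(118*p*q + 7*q^2) := by
      simp only [A]; linear_combination -h
    rw [heq]
    exact hd2.add (Dvd.intro _ rfl)
  have hd2 : IsCoprime (d:ℤ) 2 := by
    refine (Int.prime_two.coprime_iff_not_dvd.mpr ?_).symm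
    intro hc
    exact hAodd (hc.trans hdA)
  have hd243pq : (d:ℤ) ∣ 243*(p*q) := hd2.dvd_of_dvd_mul_left hd486
  -- coprimality of d with p and with q
  have hcop3w_p : IsCoprime ((3:ℤ)^ω) p := hcp3.symm.pow_left
  have hcop3w_q : IsCoprime ((3:ℤ)^ω) q := by
    have hcq3 : IsCoprime (3:ℤ) q := p3.coprime_iff_not_dvd.mpr h3q
    exact hcq3.pow_left
  have hcopAp : IsCoprime (A p q) p := by
    have h1 : IsCoprime (-(3:ℤ)^ω) p := hcop3w_p.neg_left
    have h2 := h1.add_mul_left_left (118*p - 236*q)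
    have heq : A p q = -(3:ℤ)^ω + p*(118*p - 236*q) := by
      simp only [A]; linear_combination -h
    rwa [← heq] at h2
  have hcopAq : IsCoprime (A p q) q := by
    have h2 := hcop3w_q.add_mul_left_left (-236*p - 14*q)
    have heq : A p q = (3:ℤ)^ω + q*(-236*p - 14*q) := by
      simp only [A]; linear_combination h
    rwa [← heq] at h2
  have hcopdp : IsCoprime ((d:ℤ)) p := hcopAp.of_isCoprime_of_dvd_left hdA
  have hcopdq : IsCoprime ((d:ℤ)) q := hcopAq.of_isCoprime_of_dvd_left hdA
  have hd243 : (d:ℤ) ∣ 243 := by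
    have h1 : (d:ℤ) ∣ p*(243*q) := by
      have : 243*(p*q) = p*(243*q) := by ring
      rwa [this] at hd243pq
    have h2 : (d:ℤ) ∣ 243*q := hcopdp.dvd_of_dvd_mul_left h1
    have h3 : (d:ℤ) ∣ q*243 := by rwa [mul_comm] at h2
    exact hcopdq.dvd_of_dvd_mul_left h3
  -- lower bound
  have h243d : (243:ℤ) ∣ (d:ℤ) := Int.dvd_coe_gcd hA243 hB243
  have hup : d ∣ 243 := by exact_mod_cast hd243
  have hlow : 243 ∣ d := by exact_mod_cast h243d
  have hfin : d = 243 := Nat.dvd_antisymm hup hlow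
  rw [hfin]
  norm_num
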